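/- Let X, Y be random variables over {0,1}ⁿ, and let Z = z be a fixed setting of a random process and A a random variable, where an output z_out ∈ {±1} is determined by A and z. Suppose (i) H̃∞(Y | A, Z=z) + H̃∞(X | A, Z=z) ≥ n + 2γ, and (ii) I(Y; X | A, Z=z) ≤ 2^{-2γ}, for some γ ≥ 3. Then E_{A|Z=z}[ |E[χ_Y(X) · z_out | A=a, Z=z]| ] < 2^{-γ+2}, where χ_Y(X) = (-1)^{⟨Y,X⟩} with the inner product over F₂. -/
import Mathlib


open Finset Real Matrix
open scoped BigOperators Classical

noncomputable section

/-- Probability of an event under a finitely supported probability mass `p`. -/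
def pr {Ω : Type*} [Fintype Ω] (p : Ω → ℝ) (E : Ω → Prop) : ℝ :=
  ∑ ω, if E ω then p ω else 0

/-- Distribution (pushforward pmf) of a random variable `A`. -/
def dst {Ω α : Type*} [Fintype Ω] (p : Ω → ℝ) (A : Ω → α) (a : α) : ℝ :=
  pr p (fun ω => A ω = a)

/-- Shannon entropy (base 2). -/
def ent {Ω α : Type*} [Fintype Ω] [Fintype α] (p : Ω → ℝ) (A : Ω → α) : ℝ :=
  ∑ a, -(dst p A a * Real.logb 2 (dst p A a))

/-- Conditional entropy `H(A|B) = H(A,B) - H(B)`. -/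
def condEnt {Ω α β : Type*} [Fintype Ω] [Fintype α] [Fintype β]
    (p : Ω → ℝ) (A : Ω → α) (B : Ω → β) : ℝ :=
  ent p (fun ω => (A ω, B ω)) - ent p B

/-- Conditional mutual information `I(A;B|C) = H(A|C) - H(A|B,C)`. -/
def condMI {Ω α β γ : Type*} [Fintype Ω] [Fintype α] [Fintype β] [Fintype γ]
    (p : Ω → ℝ) (A : Ω → α) (B : Ω → β) (C : Ω → γ) : ℝ :=
  condEnt p A C - condEnt p A (fun ω => (B ω, C ω))

/-- Min-entropy `H∞(A) = -log₂ max_a Pr[A = a]`. -/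
def minEnt {Ω α : Type*} [Fintype Ω] [Fintype α] [Nonempty α] (p : Ω → ℝ) (A : Ω → α) : ℝ :=
  -Real.logb 2 (Finset.univ.sup' Finset.univ_nonempty fun a => dst p A a)

/-- Rényi entropy of order 2: `H₂(A) = -log₂ ∑_a Pr[A=a]²`. -/
def renyi2 {Ω α : Type*} [Fintype Ω] [Fintype α] (p : Ω → ℝ) (A : Ω → α) : ℝ :=
  -Real.logb 2 (∑ a, (dst p A a) ^ 2)

/-- Average min-entropy `H̃∞(A|B) = -log₂ E_{b∼B}[max_a Pr[A=a | B=b]]`. -/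
def avgMinEnt {Ω α β : Type*} [Fintype Ω] [Fintype α] [Nonempty α] [Fintype β]
    (p : Ω → ℝ) (A : Ω → α) (B : Ω → β) : ℝ :=
  -Real.logb 2 (∑ b, dst p B b *
    (Finset.univ.sup' Finset.univ_nonempty fun a =>
      pr p (fun ω => A ω = a ∧ B ω = b) / dst p B b))

/-- The Fourier character χ_y(x) = (-1)^{⟨y,x⟩ mod 2}. -/
def chi {n : ℕ} (y x : Fin n → Bool) : ℝ :=
  (-1 : ℝ) ^ (Finset.univ.filter fun i => y i ∧ x i).card

/-! ### Auxiliary lemmas -/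

section Aux

lemma pr_congr {Ω : Type*} [Fintype Ω] (p : Ω → ℝ) {E F : Ω → Prop}
    (h : ∀ ω, E ω ↔ F ω) : pr p E = pr p F := by
  unfold pr
  exact Finset.sum_congr rfl fun ω _ => if_congr (h ω) rfl rfl

lemma pr_nonneg {Ω : Type*} [Fintype Ω] {p : Ω → ℝ} (hp : ∀ ω, 0 ≤ p ω)
    (E : Ω → Prop) : 0 ≤ pr p E := by
  unfold pr
  refine Finset.sum_nonneg fun ω _ => ?_
  by_cases h : E ω <;> simp [h, hp ω]

lemma pr_mono {Ω : Type*} [Fintype Ω] {p : Ω → ℝ} (hp : ∀ ω, 0 ≤ p ω)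
    {E F : Ω → Prop} (h : ∀ ω, E ω → F ω) : pr p E ≤ pr p F := by
  unfold pr
  refine Finset.sum_le_sum fun ω _ => ?_
  by_cases hE : E ω
  · simp [hE, h ω hE]
  · by_cases hF : F ω <;> simp [hE, hF, hp ω]

lemma pr_sum_fiber {Ω β : Type*} [Fintype Ω] [Fintype β] (p : Ω → ℝ)
    (E : Ω → Prop) (V : Ω → β) :
    ∑ v, pr p (fun ω => E ω ∧ V ω = v) = pr p E := by
  unfold pr
  rw [Finset.sum_comm]
  refine Finset.sum_congr rfl fun ω _ => ?_
  by_cases h : E ω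
  · simp [h, Finset.sum_ite_eq]
  · simp [h]

/-! chi lemmas -/

lemma chi_eq_prod {n : ℕ} (y x : Fin n → Bool) :
    chi y x = ∏ i, (if y i ∧ x i then (-1 : ℝ) else 1) := by
  rw [Finset.prod_ite, Finset.prod_const, Finset.prod_const, one_pow, mul_one, chi]

lemma abs_chi {n : ℕ} (y x : Fin n → Bool) : |chi y x| = 1 := by
  rw [chi, abs_pow, abs_neg, abs_one, one_pow]

lemma sum_chi_mul_chi {n : ℕ} (x x' : Fin n → Bool) :
    ∑ y, chi y x * chi y x' = if x = x' then ((2 : ℝ) ^ n) else 0 := by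
  have h1 : ∀ y : Fin n → Bool, chi y x * chi y x' =
      ∏ i, ((if y i ∧ x i then (-1 : ℝ) else 1) * (if y i ∧ x' i then (-1 : ℝ) else 1)) := by
    intro y
    rw [chi_eq_prod, chi_eq_prod, ← Finset.prod_mul_distrib]
  have h2 := Finset.prod_univ_sum (fun _ : Fin n => (Finset.univ : Finset Bool))
    (fun i b => (if b ∧ x i then (-1 : ℝ) else 1) * (if b ∧ x' i then (-1 : ℝ) else 1))
  rw [Fintype.piFinset_univ] at h2
  have h3 : ∀ i : Fin n, (∑ b : Bool, (if b ∧ x i then (-1 : ℝ) else 1) *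
      (if b ∧ x' i then (-1 : ℝ) else 1)) = if x i = x' i then 2 else 0 := by
    intro i
    cases hxi : x i <;> cases hxi' : x' i <;> simp [hxi, hxi', Fintype.sum_bool] <;> norm_num
  calc ∑ y, chi y x * chi y x'
      = ∑ y : Fin n → Bool, ∏ i, ((if y i ∧ x i then (-1 : ℝ) else 1) *
          (if y i ∧ x' i then (-1 : ℝ) else 1)) := Finset.sum_congr rfl fun y _ => h1 y
    _ = ∏ i, ∑ b : Bool, (if b ∧ x i then (-1 : ℝ) else 1) *
          (if b ∧ x' i then (-1 : ℝ) else 1) := h2.symm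
    _ = ∏ i, (if x i = x' i then (2 : ℝ) else 0) := Finset.prod_congr rfl fun i _ => h3 i
    _ = if x = x' then ((2 : ℝ) ^ n) else 0 := by
        by_cases hxx : x = x'
        · simp [hxx, Finset.prod_const]
        · obtain ⟨i, hi⟩ := Function.ne_iff.1 hxx
          rw [if_neg hxx]
          exact Finset.prod_eq_zero (Finset.mem_univ i) (by simp [hi])

lemma lindsey {n : ℕ} (P Q : (Fin n → Bool) → ℝ) :
    (∑ x, ∑ y, chi y x * P x * Q y) ^ 2 ≤ (2 : ℝ) ^ n * ((∑ x, P x ^ 2) * (∑ y, Q y ^ 2)) := by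
  have hswap : ∑ x, ∑ y, chi y x * P x * Q y = ∑ y, Q y * (∑ x, chi y x * P x) := by
    rw [Finset.sum_comm]
    refine Finset.sum_congr rfl fun y _ => ?_
    rw [Finset.mul_sum]
    exact Finset.sum_congr rfl fun x _ => by ring
  have hT : ∑ y, (∑ x, chi y x * P x) ^ 2 = (2 : ℝ) ^ n * ∑ x, P x ^ 2 := by
    have expand : ∀ y : Fin n → Bool, (∑ x, chi y x * P x) ^ 2 =
        ∑ x, ∑ x', (chi y x * chi y x') * (P x * P x') := by
      intro y
      rw [sq, Finset.sum_mul_sum]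
      exact Finset.sum_congr rfl fun x _ => Finset.sum_congr rfl fun x' _ => by ring
    calc ∑ y, (∑ x, chi y x * P x) ^ 2
        = ∑ y, ∑ x, ∑ x', (chi y x * chi y x') * (P x * P x') :=
          Finset.sum_congr rfl fun y _ => expand y
      _ = ∑ x, ∑ x', (∑ y, chi y x * chi y x') * (P x * P x') := by
          rw [Finset.sum_comm]
          refine Finset.sum_congr rfl fun x _ => ?_
          rw [Finset.sum_comm]
          exact Finset.sum_congr rfl fun x' _ => by rw [Finset.sum_mul]
      _ = ∑ x, (2 : ℝ) ^ n * P x ^ 2 := by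
          refine Finset.sum_congr rfl fun x _ => ?_
          rw [Finset.sum_eq_single x]
          · rw [sum_chi_mul_chi, if_pos rfl]; ring
          · intro x' _ hx'
            rw [sum_chi_mul_chi, if_neg (Ne.symm hx'), zero_mul]
          · intro h; exact absurd (Finset.mem_univ x) h
      _ = (2 : ℝ) ^ n * ∑ x, P x ^ 2 := by rw [Finset.mul_sum]
  calc (∑ x, ∑ y, chi y x * P x * Q y) ^ 2
      = (∑ y, Q y * (∑ x, chi y x * P x)) ^ 2 := by rw [hswap]
    _ ≤ (∑ y, Q y ^ 2) * (∑ y, (∑ x, chi y x * P x) ^ 2) :=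
        Finset.sum_mul_sq_le_sq_mul_sq _ _ _
    _ = (∑ y, Q y ^ 2) * ((2 : ℝ) ^ n * ∑ x, P x ^ 2) := by rw [hT]
    _ = (2 : ℝ) ^ n * ((∑ x, P x ^ 2) * (∑ y, Q y ^ 2)) := by ring

/-! Pointwise KL ≥ squared Hellinger, and an elementary Pinsker-type inequality. -/

lemma kl_ge_hellinger {x y : ℝ} (hx : 0 ≤ x) (hy : 0 ≤ y) (h0 : y = 0 → x = 0) :
    (Real.sqrt x - Real.sqrt y) ^ 2 ≤ x * Real.log (x / y) - x + y := by
  rcases eq_or_lt_of_le hx with hx0 | hx0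
  · rw [← hx0]
    simp [Real.sq_sqrt hy]
  · have hy0 : 0 < y := by
      rcases eq_or_lt_of_le hy with hy0 | hy0
      · exact absurd (h0 hy0.symm).symm hx0.ne
      · exact hy0
    have hd : 0 < y / x := div_pos hy0 hx0
    have hsd : 0 < Real.sqrt (y / x) := Real.sqrt_pos.2 hd
    have hlog1 : Real.log (Real.sqrt (y / x)) ≤ Real.sqrt (y / x) - 1 :=
      Real.log_le_sub_one_of_pos hsd
    have hlog2 : Real.log (y / x) = 2 * Real.log (Real.sqrt (y / x)) := by
      rw [Real.log_sqrt hd.le]; ring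
    have hlog3 : Real.log (x / y) = -Real.log (y / x) := by
      rw [← Real.log_inv]
      congr 1
      field_simp
    have hxsq : x * Real.sqrt (y / x) = Real.sqrt x * Real.sqrt y := by
      have h : x * (Real.sqrt y / Real.sqrt x) = x / Real.sqrt x * Real.sqrt y := by ring
      rw [Real.sqrt_div hy x, h, Real.div_sqrt]
    have key : x * Real.log (x / y) ≥ 2 * x - 2 * (Real.sqrt x * Real.sqrt y) := by
      have h1 : x * Real.log (x / y) = -(x * Real.log (y / x)) := by rw [hlog3]; ring
      have h2 : x * Real.log (y / x) ≤ x * (2 * (Real.sqrt (y / x) - 1)) := by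
        apply mul_le_mul_of_nonneg_left _ hx
        rw [hlog2]; linarith
      have h3 : x * (2 * (Real.sqrt (y / x) - 1)) = 2 * (Real.sqrt x * Real.sqrt y) - 2 * x := by
        linear_combination 2 * hxsq
      linarith
    have hsx := Real.sq_sqrt hx
    have hsy := Real.sq_sqrt hy
    nlinarith [key, hsx, hsy]

lemma pinsker_lite {ι : Type*} [Fintype ι] (u v : ι → ℝ)
    (hu : ∀ i, 0 ≤ u i) (hv : ∀ i, 0 ≤ v i) (hg : ∀ i, v i = 0 → u i = 0) :
    (∑ i, |u i - v i|) ^ 2 ≤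
      (2 * ∑ i, (u i + v i)) * (∑ i, (u i * Real.log (u i / v i) - u i + v i)) := by
  have hrw : ∀ i, |u i - v i| =
      |Real.sqrt (u i) - Real.sqrt (v i)| * (Real.sqrt (u i) + Real.sqrt (v i)) := by
    intro i
    have h : (Real.sqrt (u i) - Real.sqrt (v i)) * (Real.sqrt (u i) + Real.sqrt (v i))
        = u i - v i := by
      have h1 := Real.sq_sqrt (hu i)
      have h2 := Real.sq_sqrt (hv i)
      nlinarith
    rw [← h, abs_mul, abs_of_nonneg (add_nonneg (Real.sqrt_nonneg _) (Real.sqrt_nonneg _))]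
  have hklnn : ∀ i, (Real.sqrt (u i) - Real.sqrt (v i)) ^ 2 ≤
      u i * Real.log (u i / v i) - u i + v i := fun i =>
    kl_ge_hellinger (hu i) (hv i) (hg i)
  have hklsum_nn : 0 ≤ ∑ i, (u i * Real.log (u i / v i) - u i + v i) :=
    Finset.sum_nonneg fun i _ => le_trans (sq_nonneg _) (hklnn i)
  calc (∑ i, |u i - v i|) ^ 2
      = (∑ i, |Real.sqrt (u i) - Real.sqrt (v i)| * (Real.sqrt (u i) + Real.sqrt (v i))) ^ 2 := by
        rw [Finset.sum_congr rfl fun i _ => hrw i]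
    _ ≤ (∑ i, |Real.sqrt (u i) - Real.sqrt (v i)| ^ 2) *
          (∑ i, (Real.sqrt (u i) + Real.sqrt (v i)) ^ 2) :=
        Finset.sum_mul_sq_le_sq_mul_sq _ _ _
    _ = (∑ i, (Real.sqrt (u i) - Real.sqrt (v i)) ^ 2) *
          (∑ i, (Real.sqrt (u i) + Real.sqrt (v i)) ^ 2) := by simp [sq_abs]
    _ ≤ (∑ i, (u i * Real.log (u i / v i) - u i + v i)) * (∑ i, 2 * (u i + v i)) := by
        apply mul_le_mul (Finset.sum_le_sum fun i _ => hklnn i)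
          (Finset.sum_le_sum fun i _ => ?_)
          (Finset.sum_nonneg fun i _ => sq_nonneg _) hklsum_nn
        have h1 := Real.sq_sqrt (hu i)
        have h2 := Real.sq_sqrt (hv i)
        nlinarith [sq_nonneg (Real.sqrt (u i) - Real.sqrt (v i))]
    _ = (2 * ∑ i, (u i + v i)) * (∑ i, (u i * Real.log (u i / v i) - u i + v i)) := by
        rw [← Finset.mul_sum]; ring

lemma sum_sqrt_mul_sqrt {ι : Type*} [Fintype ι] (u v : ι → ℝ)
    (hu : ∀ i, 0 ≤ u i) (hv : ∀ i, 0 ≤ v i) :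
    ∑ i, Real.sqrt (u i) * Real.sqrt (v i) ≤ Real.sqrt (∑ i, u i) * Real.sqrt (∑ i, v i) := by
  have h1 : (∑ i, Real.sqrt (u i) * Real.sqrt (v i)) ^ 2 ≤ (∑ i, u i) * (∑ i, v i) := by
    calc (∑ i, Real.sqrt (u i) * Real.sqrt (v i)) ^ 2
        ≤ (∑ i, Real.sqrt (u i) ^ 2) * (∑ i, Real.sqrt (v i) ^ 2) :=
          Finset.sum_mul_sq_le_sq_mul_sq _ _ _
      _ = (∑ i, u i) * (∑ i, v i) := by
          rw [Finset.sum_congr rfl fun i _ => Real.sq_sqrt (hu i),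
            Finset.sum_congr rfl fun i _ => Real.sq_sqrt (hv i)]
  have h2 : 0 ≤ ∑ i, Real.sqrt (u i) * Real.sqrt (v i) :=
    Finset.sum_nonneg fun i _ => mul_nonneg (Real.sqrt_nonneg _) (Real.sqrt_nonneg _)
  calc ∑ i, Real.sqrt (u i) * Real.sqrt (v i)
      = Real.sqrt ((∑ i, Real.sqrt (u i) * Real.sqrt (v i)) ^ 2) := (Real.sqrt_sq h2).symm
    _ ≤ Real.sqrt ((∑ i, u i) * (∑ i, v i)) := Real.sqrt_le_sqrt h1
    _ = Real.sqrt (∑ i, u i) * Real.sqrt (∑ i, v i) :=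
        Real.sqrt_mul (Finset.sum_nonneg fun i _ => hu i) _

end Aux

/-! ### Joint mass functions and entropy bookkeeping -/

section Setup

variable {Ω α : Type*} [Fintype Ω] [Fintype α] {n : ℕ}

/-- Joint (unnormalized) mass of `A = a, X = x, Y = y`. -/
def Jm (p : Ω → ℝ) (Y X : Ω → Fin n → Bool) (A : Ω → α)
    (a : α) (x yv : Fin n → Bool) : ℝ :=
  pr p (fun ω => A ω = a ∧ X ω = x ∧ Y ω = yv)

def Jx (p : Ω → ℝ) (Y X : Ω → Fin n → Bool) (A : Ω → α) (a : α) (x : Fin n → Bool) : ℝ :=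
  ∑ yv, Jm p Y X A a x yv

def Jy (p : Ω → ℝ) (Y X : Ω → Fin n → Bool) (A : Ω → α) (a : α) (yv : Fin n → Bool) : ℝ :=
  ∑ x, Jm p Y X A a x yv

variable (p : Ω → ℝ) (Y X : Ω → Fin n → Bool) (A : Ω → α)

lemma Jx_eq (a : α) (x : Fin n → Bool) :
    Jx p Y X A a x = pr p (fun ω => A ω = a ∧ X ω = x) := by
  unfold Jx Jm
  rw [← pr_sum_fiber p (fun ω => A ω = a ∧ X ω = x) Y]
  exact Finset.sum_congr rfl fun yv _ => pr_congr p fun ω => by tauto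

lemma Jy_eq (a : α) (yv : Fin n → Bool) :
    Jy p Y X A a yv = pr p (fun ω => A ω = a ∧ Y ω = yv) := by
  unfold Jy Jm
  rw [← pr_sum_fiber p (fun ω => A ω = a ∧ Y ω = yv) X]
  exact Finset.sum_congr rfl fun x _ => pr_congr p fun ω => by tauto

lemma sum_Jx (a : α) : ∑ x, Jx p Y X A a x = dst p A a := by
  unfold dst
  rw [← pr_sum_fiber p (fun ω => A ω = a) X]
  exact Finset.sum_congr rfl fun x _ => (Jx_eq p Y X A a x)

lemma sum_Jy (a : α) : ∑ yv, Jy p Y X A a yv = dst p A a := by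
  unfold dst
  rw [← pr_sum_fiber p (fun ω => A ω = a) Y]
  exact Finset.sum_congr rfl fun yv _ => (Jy_eq p Y X A a yv)

lemma sum_Jm (a : α) : ∑ x, ∑ yv, Jm p Y X A a x yv = dst p A a := by
  rw [← sum_Jx p Y X A a]
  rfl

variable {p} in
lemma Jm_nonneg (hp : ∀ ω, 0 ≤ p ω) (a : α) (x yv : Fin n → Bool) :
    0 ≤ Jm p Y X A a x yv := pr_nonneg hp _

variable {p} in
lemma Jx_nonneg (hp : ∀ ω, 0 ≤ p ω) (a : α) (x : Fin n → Bool) :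
    0 ≤ Jx p Y X A a x := Finset.sum_nonneg fun _ _ => Jm_nonneg Y X A hp _ _ _

variable {p} in
lemma Jy_nonneg (hp : ∀ ω, 0 ≤ p ω) (a : α) (yv : Fin n → Bool) :
    0 ≤ Jy p Y X A a yv := Finset.sum_nonneg fun _ _ => Jm_nonneg Y X A hp _ _ _

variable {p} in
lemma Jm_le_Jx (hp : ∀ ω, 0 ≤ p ω) (a : α) (x yv : Fin n → Bool) :
    Jm p Y X A a x yv ≤ Jx p Y X A a x := by
  unfold Jx
  exact Finset.single_le_sum (fun i _ => Jm_nonneg Y X A hp a x i) (Finset.mem_univ yv)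

variable {p} in
lemma Jm_le_Jy (hp : ∀ ω, 0 ≤ p ω) (a : α) (x yv : Fin n → Bool) :
    Jm p Y X A a x yv ≤ Jy p Y X A a yv := by
  unfold Jy
  exact Finset.single_le_sum (fun i _ => Jm_nonneg Y X A hp a i yv) (Finset.mem_univ x)

variable {p} in
lemma dst_nonneg (hp : ∀ ω, 0 ≤ p ω) (a : α) : 0 ≤ dst p A a := pr_nonneg hp _

variable {p} in
lemma sum_dst (hp1 : ∑ ω, p ω = 1) : ∑ a, dst p A a = 1 := by
  unfold dst pr
  have hc : ∑ a, ∑ ω, (if A ω = a then p ω else 0) = ∑ ω, ∑ a, (if A ω = a then p ω else 0) :=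
    Finset.sum_comm
  rw [hc, ← hp1]
  exact Finset.sum_congr rfl fun ω _ => by simp [Finset.sum_ite_eq]

/-! Entropy computations -/

lemma ent_A_eq : ent p A = ∑ a, -(dst p A a * Real.logb 2 (dst p A a)) := rfl

lemma ent_YA_eq : ent p (fun ω => (Y ω, A ω)) =
    ∑ a, ∑ yv, -(Jy p Y X A a yv * Real.logb 2 (Jy p Y X A a yv)) := by
  have hdst : ∀ (yv : Fin n → Bool) (a : α),
      dst p (fun ω => (Y ω, A ω)) (yv, a) = Jy p Y X A a yv := by
    intro yv a
    rw [Jy_eq]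
    exact pr_congr p fun ω => by simp [Prod.ext_iff]; tauto
  unfold ent
  rw [Fintype.sum_prod_type, Finset.sum_comm]
  exact Finset.sum_congr rfl fun a _ => Finset.sum_congr rfl fun yv _ => by rw [hdst]

lemma ent_XA_eq : ent p (fun ω => (X ω, A ω)) =
    ∑ a, ∑ x, -(Jx p Y X A a x * Real.logb 2 (Jx p Y X A a x)) := by
  have hdst : ∀ (x : Fin n → Bool) (a : α),
      dst p (fun ω => (X ω, A ω)) (x, a) = Jx p Y X A a x := by
    intro x a
    rw [Jx_eq]
    exact pr_congr p fun ω => by simp [Prod.ext_iff]; tauto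
  unfold ent
  rw [Fintype.sum_prod_type, Finset.sum_comm]
  exact Finset.sum_congr rfl fun a _ => Finset.sum_congr rfl fun x _ => by rw [hdst]

lemma sum_comm3 {β γ δ M : Type*} [Fintype β] [Fintype γ] [Fintype δ] [AddCommMonoid M]
    (f : β → γ → δ → M) : ∑ b, ∑ c, ∑ d, f b c d = ∑ d, ∑ c, ∑ b, f b c d := by
  have h1 : ∑ b, ∑ c, ∑ d, f b c d = ∑ c, ∑ b, ∑ d, f b c d := Finset.sum_comm
  have h2 : ∀ c, (∑ b, ∑ d, f b c d) = ∑ d, ∑ b, f b c d := fun c => Finset.sum_comm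
  have h3 : ∑ c, ∑ d, ∑ b, f b c d = ∑ d, ∑ c, ∑ b, f b c d := Finset.sum_comm
  rw [h1, Finset.sum_congr rfl fun c _ => h2 c, h3]

lemma ent_YXA_eq : ent p (fun ω => (Y ω, (X ω, A ω))) =
    ∑ a, ∑ x, ∑ yv, -(Jm p Y X A a x yv * Real.logb 2 (Jm p Y X A a x yv)) := by
  have hdst : ∀ (yv x : Fin n → Bool) (a : α),
      dst p (fun ω => (Y ω, (X ω, A ω))) (yv, (x, a)) = Jm p Y X A a x yv := by
    intro yv x a
    unfold Jm
    exact pr_congr p fun ω => by simp [Prod.ext_iff]; tauto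
  unfold ent
  rw [Fintype.sum_prod_type]
  simp only [Fintype.sum_prod_type]
  have h1 : ∀ yv : Fin n → Bool, ∑ x, ∑ a,
        -(dst p (fun ω => (Y ω, (X ω, A ω))) (yv, (x, a)) *
          Real.logb 2 (dst p (fun ω => (Y ω, (X ω, A ω))) (yv, (x, a)))) =
      ∑ x, ∑ a, -(Jm p Y X A a x yv * Real.logb 2 (Jm p Y X A a x yv)) := by
    intro yv
    exact Finset.sum_congr rfl fun x _ => Finset.sum_congr rfl fun a _ => by rw [hdst]
  exact Eq.trans (Finset.sum_congr rfl fun yv _ => h1 yv) (sum_comm3 _)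

variable {p} in
lemma condMI_eq (hp : ∀ ω, 0 ≤ p ω) :
    condMI p Y X A = ∑ a, ∑ x, ∑ yv,
      Jm p Y X A a x yv * Real.logb 2
        (Jm p Y X A a x yv * dst p A a / (Jx p Y X A a x * Jy p Y X A a yv)) := by
  unfold condMI condEnt
  rw [ent_YA_eq p Y X A, ent_XA_eq p Y X A, ent_YXA_eq p Y X A, ent_A_eq]
  rw [← Finset.sum_sub_distrib, ← Finset.sum_sub_distrib, ← Finset.sum_sub_distrib]
  refine Finset.sum_congr rfl fun a _ => ?_
  -- rewrite marginal entropy sums as triple sums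
  have e1 : (∑ x, ∑ yv, Jm p Y X A a x yv * Real.logb 2 (dst p A a)) =
      dst p A a * Real.logb 2 (dst p A a) := by
    simp only [← Finset.sum_mul]
    rw [sum_Jm p Y X A a]
  have e2 : (∑ x, ∑ yv, Jm p Y X A a x yv * Real.logb 2 (Jx p Y X A a x)) =
      ∑ x, Jx p Y X A a x * Real.logb 2 (Jx p Y X A a x) := by
    refine Finset.sum_congr rfl fun x _ => ?_
    rw [← Finset.sum_mul, ← Jx]
  have e3 : (∑ x, ∑ yv, Jm p Y X A a x yv * Real.logb 2 (Jy p Y X A a yv)) =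
      ∑ yv, Jy p Y X A a yv * Real.logb 2 (Jy p Y X A a yv) := by
    have hc : (∑ x, ∑ yv, Jm p Y X A a x yv * Real.logb 2 (Jy p Y X A a yv)) =
        ∑ yv, ∑ x, Jm p Y X A a x yv * Real.logb 2 (Jy p Y X A a yv) := Finset.sum_comm
    rw [hc]
    refine Finset.sum_congr rfl fun yv _ => ?_
    rw [← Finset.sum_mul, ← Jy]
  have lhs_eq : (∑ yv, -(Jy p Y X A a yv * Real.logb 2 (Jy p Y X A a yv))) -
        -(dst p A a * Real.logb 2 (dst p A a)) -
        ((∑ x, ∑ yv, -(Jm p Y X A a x yv * Real.logb 2 (Jm p Y X A a x yv))) -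
          ∑ x, -(Jx p Y X A a x * Real.logb 2 (Jx p Y X A a x))) =
      ∑ x, ∑ yv, (Jm p Y X A a x yv * Real.logb 2 (Jm p Y X A a x yv)
        + Jm p Y X A a x yv * Real.logb 2 (dst p A a)
        - Jm p Y X A a x yv * Real.logb 2 (Jx p Y X A a x)
        - Jm p Y X A a x yv * Real.logb 2 (Jy p Y X A a yv)) := by
    simp only [Finset.sum_neg_distrib, Finset.sum_add_distrib, Finset.sum_sub_distrib]
    rw [e1, e2, e3]
    ring
  rw [lhs_eq]
  refine Finset.sum_congr rfl fun x _ => Finset.sum_congr rfl fun yv _ => ?_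
  by_cases hm : Jm p Y X A a x yv = 0
  · simp [hm]
  · have hm0 : 0 < Jm p Y X A a x yv := lt_of_le_of_ne (Jm_nonneg Y X A hp a x yv) (Ne.symm hm)
    have hjx : 0 < Jx p Y X A a x := lt_of_lt_of_le hm0 (Jm_le_Jx Y X A hp a x yv)
    have hjy : 0 < Jy p Y X A a yv := lt_of_lt_of_le hm0 (Jm_le_Jy Y X A hp a x yv)
    have hw0 : 0 < dst p A a := by
      rw [← sum_Jx p Y X A a]
      exact lt_of_lt_of_le hjx (Finset.single_le_sum
        (fun x' _ => Jx_nonneg Y X A hp a x') (Finset.mem_univ x))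
    rw [Real.logb_div (by positivity) (by positivity),
      Real.logb_mul (ne_of_gt hm0) (ne_of_gt hw0),
      Real.logb_mul (ne_of_gt hjx) (ne_of_gt hjy)]
    ring

end Setup

lemma sum_pr_weighted {Ω : Type*} [Fintype Ω] (p : Ω → ℝ) {β γ : Type*} [Fintype β]
    [Fintype γ] (U : Ω → β) (V : Ω → γ) (E : Ω → Prop) (g : β → γ → ℝ) :
    ∑ b, ∑ c, g b c * pr p (fun ω => E ω ∧ U ω = b ∧ V ω = c) =
      ∑ ω, if E ω then g (U ω) (V ω) * p ω else 0 := by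
  unfold pr
  simp only [Finset.mul_sum, mul_ite, mul_zero]
  rw [sum_comm3 (fun b c ω => if E ω ∧ U ω = b ∧ V ω = c then g b c * p ω else 0)]
  refine Finset.sum_congr rfl fun ω _ => ?_
  by_cases hE : E ω
  · simp [hE, ite_and, Finset.sum_ite_eq]
  · simp [hE]

/-- Combinatorial lemma: if H̃∞(Y|A) + H̃∞(X|A) ≥ n + 2γ and I(Y;X|A) ≤ 2^{-2γ} (γ ≥ 3),
    then E_A[|E[χ_Y(X)·z_out | A=a]|] < 2^{-γ+2}.
    (The fixed conditioning Z = z is absorbed into the probability mass p.) -/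
theorem stmt_9 {Ω α : Type*} [Fintype Ω] [Fintype α] (n : ℕ)
    (p : Ω → ℝ) (hp : ∀ ω, 0 ≤ p ω) (hp1 : ∑ ω, p ω = 1)
    (Y X : Ω → (Fin n → Bool)) (A : Ω → α)
    (zout : α → ℝ) (hz : ∀ a, zout a = 1 ∨ zout a = -1)
    (ga : ℝ) (hga : 3 ≤ ga)
    (hmin : avgMinEnt p Y A + avgMinEnt p X A ≥ n + 2 * ga)
    (hI : condMI p Y X A ≤ (2 : ℝ) ^ (-(2 * ga))) :
    (∑ a, dst p A a *
        |(∑ ω, if A ω = a then p ω * chi (Y ω) (X ω) * zout a else 0) / dst p A a|) <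
      (2 : ℝ) ^ (-ga + 2) := by

  classical
  have hw0 : ∀ a : α, 0 ≤ dst p A a := fun a => pr_nonneg hp _
  have hwsum : ∑ a, dst p A a = 1 := sum_dst A hp1
  obtain ⟨S, hS⟩ : ∃ S : α → ℝ,
      S = fun a => ∑ x, ∑ yv, chi yv x * Jm p Y X A a x yv := ⟨_, rfl⟩
  obtain ⟨mX, hmX⟩ : ∃ f : α → ℝ, f = fun b => dst p A b *
      (Finset.univ.sup' Finset.univ_nonempty fun x =>
        pr p (fun ω => X ω = x ∧ A ω = b) / dst p A b) := ⟨_, rfl⟩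
  obtain ⟨mY, hmY⟩ : ∃ f : α → ℝ, f = fun b => dst p A b *
      (Finset.univ.sup' Finset.univ_nonempty fun yv =>
        pr p (fun ω => Y ω = yv ∧ A ω = b) / dst p A b) := ⟨_, rfl⟩
  obtain ⟨Ln, hLn⟩ : ∃ f : α → ℝ, f = fun a => ∑ x, ∑ yv, Jm p Y X A a x yv *
      Real.log (Jm p Y X A a x yv * dst p A a /
        (Jx p Y X A a x * Jy p Y X A a yv)) := ⟨_, rfl⟩
  have hHX : avgMinEnt p X A = -Real.logb 2 (∑ b, mX b) := by rw [hmX]; rfl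
  have hHY : avgMinEnt p Y A = -Real.logb 2 (∑ b, mY b) := by rw [hmY]; rfl
  -- basic nonnegativity
  have hJm0 : ∀ a x yv, 0 ≤ Jm p Y X A a x yv := fun a x yv => Jm_nonneg Y X A hp a x yv
  have hJx0 : ∀ a x, 0 ≤ Jx p Y X A a x := fun a x => Jx_nonneg Y X A hp a x
  have hJy0 : ∀ a yv, 0 ≤ Jy p Y X A a yv := fun a yv => Jy_nonneg Y X A hp a yv
  have hprXg : ∀ a x, pr p (fun ω => X ω = x ∧ A ω = a) = Jx p Y X A a x := by
    intro a x
    rw [Jx_eq]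
    exact pr_congr p fun ω => by tauto
  have hprYg : ∀ a yv, pr p (fun ω => Y ω = yv ∧ A ω = a) = Jy p Y X A a yv := by
    intro a yv
    rw [Jy_eq]
    exact pr_congr p fun ω => by tauto
  have hmX0 : ∀ b, 0 ≤ mX b := by
    intro b
    rw [hmX]
    refine mul_nonneg (hw0 b) (le_trans ?_ (Finset.le_sup'
      (fun x => pr p (fun ω => X ω = x ∧ A ω = b) / dst p A b)
      (Finset.mem_univ (fun _ => false))))
    exact div_nonneg (pr_nonneg hp _) (hw0 b)
  have hmY0 : ∀ b, 0 ≤ mY b := by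
    intro b
    rw [hmY]
    refine mul_nonneg (hw0 b) (le_trans ?_ (Finset.le_sup'
      (fun yv => pr p (fun ω => Y ω = yv ∧ A ω = b) / dst p A b)
      (Finset.mem_univ (fun _ => false))))
    exact div_nonneg (pr_nonneg hp _) (hw0 b)
  have hJm_all0 : ∀ a, dst p A a = 0 → ∀ x yv, Jm p Y X A a x yv = 0 := by
    intro a ha x yv
    have h1 : Jm p Y X A a x yv ≤ dst p A a := by
      unfold Jm dst
      exact pr_mono hp fun ω h => h.1
    have h2 := hJm0 a x yv
    linarith
  have hS_zero : ∀ a, dst p A a = 0 → S a = 0 := by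
    intro a hwa
    rw [hS]
    show (∑ x, ∑ yv, chi yv x * Jm p Y X A a x yv) = 0
    rw [Finset.sum_congr rfl fun x _ => Finset.sum_congr rfl fun yv _ => by
      rw [hJm_all0 a hwa x yv, mul_zero]]
    simp
  -- collapse: S a as a single Ω-sum
  have hcol : ∀ a, S a = ∑ ω, if A ω = a then p ω * chi (Y ω) (X ω) else 0 := by
    intro a
    rw [hS]
    show (∑ x, ∑ yv, chi yv x * Jm p Y X A a x yv) = _
    unfold Jm
    rw [sum_pr_weighted p X Y (fun ω => A ω = a) (fun x yv => chi yv x)]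
    refine Finset.sum_congr rfl fun ω _ => ?_
    by_cases hA : A ω = a
    · simp only [hA, if_true]
      ring
    · simp [hA]
  -- rewrite the goal summand
  have hgoal_term : ∀ a, dst p A a *
      |(∑ ω, if A ω = a then p ω * chi (Y ω) (X ω) * zout a else 0) / dst p A a| = |S a| := by
    intro a
    have hz1 : |zout a| = 1 := by rcases hz a with h | h <;> simp [h]
    have hfact : (∑ ω, if A ω = a then p ω * chi (Y ω) (X ω) * zout a else 0)
        = zout a * S a := by
      rw [hcol a, Finset.mul_sum]
      refine Finset.sum_congr rfl fun ω _ => ?_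
      by_cases h : A ω = a
      · simp only [h, if_true]; ring
      · simp [h]
    rw [hfact]
    by_cases hwa : dst p A a = 0
    · simp [hwa, hS_zero a hwa]
    · have hwa' : 0 < dst p A a := lt_of_le_of_ne (hw0 a) (Ne.symm hwa)
      rw [abs_div, abs_mul, hz1, one_mul, abs_of_pos hwa']
      field_simp
  -- sum of the independent-coupling
  have hvsum : ∀ a, dst p A a ≠ 0 →
      (∑ x, ∑ yv, Jx p Y X A a x * Jy p Y X A a yv / dst p A a) = dst p A a := by
    intro a hwa
    have h1 : (∑ x, ∑ yv, Jx p Y X A a x * Jy p Y X A a yv / dst p A a)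
        = (∑ x, ∑ yv, Jx p Y X A a x * Jy p Y X A a yv) / dst p A a := by
      simp only [← Finset.sum_div]
    rw [h1]
    have h2 : (∑ x, ∑ yv, Jx p Y X A a x * Jy p Y X A a yv)
        = (∑ x, Jx p Y X A a x) * (∑ yv, Jy p Y X A a yv) :=
      (Finset.sum_mul_sum _ _ _ _).symm
    rw [h2, sum_Jx, sum_Jy, mul_div_assoc, div_self hwa, mul_one]
  have hklpt : ∀ a (x yv : Fin n → Bool), Jm p Y X A a x yv *
        Real.log (Jm p Y X A a x yv / (Jx p Y X A a x * Jy p Y X A a yv / dst p A a)) =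
      Jm p Y X A a x yv * Real.log (Jm p Y X A a x yv * dst p A a /
        (Jx p Y X A a x * Jy p Y X A a yv)) := by
    intro a x yv
    rw [div_div_eq_mul_div]
  have hguard : ∀ a, dst p A a ≠ 0 → ∀ q : (Fin n → Bool) × (Fin n → Bool),
      Jx p Y X A a q.1 * Jy p Y X A a q.2 / dst p A a = 0 → Jm p Y X A a q.1 q.2 = 0 := by
    intro a hwa q hq
    rcases div_eq_zero_iff.1 hq with h | h
    · have h2 := hJm0 a q.1 q.2
      rcases mul_eq_zero.1 h with h' | h'
      · have h1 := Jm_le_Jx Y X A hp a q.1 q.2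
        rw [h'] at h1
        linarith
      · have h1 := Jm_le_Jy Y X A hp a q.1 q.2
        rw [h'] at h1
        linarith
    · exact absurd h hwa
  have hLnkl : ∀ a, dst p A a ≠ 0 →
      (∑ x, ∑ yv, (Jm p Y X A a x yv *
          Real.log (Jm p Y X A a x yv /
            (Jx p Y X A a x * Jy p Y X A a yv / dst p A a))
        - Jm p Y X A a x yv + Jx p Y X A a x * Jy p Y X A a yv / dst p A a)) = Ln a := by
    intro a hwa
    simp only [fun x yv => hklpt a x yv]
    simp only [Finset.sum_add_distrib, Finset.sum_sub_distrib]
    rw [sum_Jm, hvsum a hwa, hLn]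
    ring
  have hLn0 : ∀ a, 0 ≤ Ln a := by
    intro a
    by_cases hwa : dst p A a = 0
    · rw [hLn]
      show (0:ℝ) ≤ ∑ x, ∑ yv, Jm p Y X A a x yv * Real.log _
      rw [Finset.sum_congr rfl fun x _ => Finset.sum_congr rfl fun yv _ => by
        rw [hJm_all0 a hwa x yv, zero_mul]]
      simp
    · rw [← hLnkl a hwa]
      refine Finset.sum_nonneg fun x _ => Finset.sum_nonneg fun yv _ => ?_
      refine le_trans (sq_nonneg (Real.sqrt (Jm p Y X A a x yv) -
        Real.sqrt (Jx p Y X A a x * Jy p Y X A a yv / dst p A a))) ?_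
      exact kl_ge_hellinger (hJm0 a x yv)
        (div_nonneg (mul_nonneg (hJx0 a x) (hJy0 a yv)) (hw0 a))
        (fun h => hguard a hwa (x, yv) h)
  -- per-a bound
  have hperA : ∀ a, |S a| ≤
      Real.sqrt ((2:ℝ)^n) * (Real.sqrt (mX a) * Real.sqrt (mY a))
        + 2 * (Real.sqrt (dst p A a) * Real.sqrt (Ln a)) := by
    intro a
    by_cases hwa : dst p A a = 0
    · rw [hS_zero a hwa, abs_zero]
      positivity
    · have hwa' : 0 < dst p A a := lt_of_le_of_ne (hw0 a) (Ne.symm hwa)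
      -- identify mX a and mY a with sups of marginals
      have hmXa : mX a = Finset.univ.sup' Finset.univ_nonempty
          (fun x => Jx p Y X A a x) := by
        simp only [hmX]
        have hfun : (fun x => pr p (fun ω => X ω = x ∧ A ω = a) / dst p A a)
            = fun x => Jx p Y X A a x / dst p A a := funext fun x => by rw [hprXg a x]
        rw [hfun]
        have hcomp' : Finset.univ.sup' Finset.univ_nonempty
              (fun x => Jx p Y X A a x / dst p A a)
            = (Finset.univ.sup' Finset.univ_nonempty fun x => Jx p Y X A a x)
                / dst p A a :=
          (Finset.comp_sup'_eq_sup'_comp Finset.univ_nonempty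
            (fun t => t / dst p A a)
            (fun u v => (max_div_div_right (hw0 a) u v).symm)).symm
        rw [hcomp', mul_comm]
        exact div_mul_cancel₀ _ hwa
      have hmYa : mY a = Finset.univ.sup' Finset.univ_nonempty
          (fun yv => Jy p Y X A a yv) := by
        simp only [hmY]
        have hfun : (fun yv => pr p (fun ω => Y ω = yv ∧ A ω = a) / dst p A a)
            = fun yv => Jy p Y X A a yv / dst p A a := funext fun yv => by rw [hprYg a yv]
        rw [hfun]
        have hcomp' : Finset.univ.sup' Finset.univ_nonempty
              (fun yv => Jy p Y X A a yv / dst p A a)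
            = (Finset.univ.sup' Finset.univ_nonempty fun yv => Jy p Y X A a yv)
                / dst p A a :=
          (Finset.comp_sup'_eq_sup'_comp Finset.univ_nonempty
            (fun t => t / dst p A a)
            (fun u v => (max_div_div_right (hw0 a) u v).symm)).symm
        rw [hcomp', mul_comm]
        exact div_mul_cancel₀ _ hwa
      -- Pinsker-type bound
      have hpins := pinsker_lite
        (fun q : (Fin n → Bool) × (Fin n → Bool) => Jm p Y X A a q.1 q.2)
        (fun q => Jx p Y X A a q.1 * Jy p Y X A a q.2 / dst p A a)
        (fun q => hJm0 a q.1 q.2)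
        (fun q => div_nonneg (mul_nonneg (hJx0 a q.1) (hJy0 a q.2)) (hw0 a))
        (hguard a hwa)
      simp only [Fintype.sum_prod_type] at hpins
      have h2w : (∑ x, ∑ yv, (Jm p Y X A a x yv
          + Jx p Y X A a x * Jy p Y X A a yv / dst p A a)) = 2 * dst p A a := by
        simp only [Finset.sum_add_distrib]
        rw [sum_Jm, hvsum a hwa]
        ring
      rw [h2w, hLnkl a hwa] at hpins
      have habs0 : 0 ≤ ∑ x, ∑ yv, |Jm p Y X A a x yv
          - Jx p Y X A a x * Jy p Y X A a yv / dst p A a| :=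
        Finset.sum_nonneg fun x _ => Finset.sum_nonneg fun yv _ => abs_nonneg _
      have hb0 : 0 ≤ 2 * (Real.sqrt (dst p A a) * Real.sqrt (Ln a)) := by positivity
      have hbsq : (2 * (Real.sqrt (dst p A a) * Real.sqrt (Ln a)))^2
          = 2 * (2 * dst p A a) * Ln a := by
        rw [mul_pow, mul_pow, Real.sq_sqrt (hw0 a), Real.sq_sqrt (hLn0 a)]
        ring
      have hT2 : (∑ x, ∑ yv, |Jm p Y X A a x yv
            - Jx p Y X A a x * Jy p Y X A a yv / dst p A a|)
          ≤ 2 * (Real.sqrt (dst p A a) * Real.sqrt (Ln a)) := by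
        calc (∑ x, ∑ yv, |Jm p Y X A a x yv
              - Jx p Y X A a x * Jy p Y X A a yv / dst p A a|)
            = Real.sqrt ((∑ x, ∑ yv, |Jm p Y X A a x yv
                - Jx p Y X A a x * Jy p Y X A a yv / dst p A a|)^2) :=
              (Real.sqrt_sq habs0).symm
          _ ≤ Real.sqrt (2 * (2 * dst p A a) * Ln a) := Real.sqrt_le_sqrt hpins
          _ = Real.sqrt ((2 * (Real.sqrt (dst p A a) * Real.sqrt (Ln a)))^2) := by
              rw [hbsq]
          _ = 2 * (Real.sqrt (dst p A a) * Real.sqrt (Ln a)) := Real.sqrt_sq hb0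
      -- Lindsey part
      have hlin := lindsey (fun x => Jx p Y X A a x) (fun yv => Jy p Y X A a yv)
      have hcX : (∑ x, Jx p Y X A a x ^ 2) ≤ mX a * dst p A a := by
        rw [hmXa]
        calc ∑ x, Jx p Y X A a x ^ 2
            ≤ ∑ x, (Finset.univ.sup' Finset.univ_nonempty fun x' => Jx p Y X A a x')
                * Jx p Y X A a x := by
              refine Finset.sum_le_sum fun x _ => ?_
              rw [sq]
              exact mul_le_mul_of_nonneg_right
                (Finset.le_sup' (fun x' => Jx p Y X A a x') (Finset.mem_univ x))
                (hJx0 a x)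
          _ = _ := by rw [← Finset.mul_sum, sum_Jx]
      have hcY : (∑ yv, Jy p Y X A a yv ^ 2) ≤ mY a * dst p A a := by
        rw [hmYa]
        calc ∑ yv, Jy p Y X A a yv ^ 2
            ≤ ∑ yv, (Finset.univ.sup' Finset.univ_nonempty fun y' => Jy p Y X A a y')
                * Jy p Y X A a yv := by
              refine Finset.sum_le_sum fun yv _ => ?_
              rw [sq]
              exact mul_le_mul_of_nonneg_right
                (Finset.le_sup' (fun y' => Jy p Y X A a y') (Finset.mem_univ yv))
                (hJy0 a yv)
          _ = _ := by rw [← Finset.mul_sum, sum_Jy]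
      have hsqb : (∑ x, ∑ yv, chi yv x * Jx p Y X A a x * Jy p Y X A a yv)^2
          ≤ ((2:ℝ)^n * (mX a * mY a)) * (dst p A a)^2 := by
        calc (∑ x, ∑ yv, chi yv x * Jx p Y X A a x * Jy p Y X A a yv)^2
            ≤ (2:ℝ)^n * ((∑ x, Jx p Y X A a x ^ 2) * (∑ yv, Jy p Y X A a yv ^ 2)) :=
              hlin
          _ ≤ (2:ℝ)^n * ((mX a * dst p A a) * (mY a * dst p A a)) := by
              refine mul_le_mul_of_nonneg_left ?_ (by positivity)
              exact mul_le_mul hcX hcY (Finset.sum_nonneg fun yv _ => sq_nonneg _)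
                (mul_nonneg (hmX0 a) (hw0 a))
          _ = ((2:ℝ)^n * (mX a * mY a)) * (dst p A a)^2 := by ring
      have hT1 : |∑ x, ∑ yv, chi yv x * Jx p Y X A a x * Jy p Y X A a yv| / dst p A a
          ≤ Real.sqrt ((2:ℝ)^n) * (Real.sqrt (mX a) * Real.sqrt (mY a)) := by
        have hL0 : 0 ≤ |∑ x, ∑ yv, chi yv x * Jx p Y X A a x * Jy p Y X A a yv|
            / dst p A a := div_nonneg (abs_nonneg _) (hw0 a)
        have hR0 : (0:ℝ) ≤ Real.sqrt ((2:ℝ)^n) *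
            (Real.sqrt (mX a) * Real.sqrt (mY a)) := by positivity
        have hRsq : (Real.sqrt ((2:ℝ)^n) * (Real.sqrt (mX a) * Real.sqrt (mY a)))^2
            = (2:ℝ)^n * (mX a * mY a) := by
          rw [mul_pow, mul_pow, Real.sq_sqrt (by positivity : (0:ℝ) ≤ (2:ℝ)^n),
            Real.sq_sqrt (hmX0 a), Real.sq_sqrt (hmY0 a)]
        calc |∑ x, ∑ yv, chi yv x * Jx p Y X A a x * Jy p Y X A a yv| / dst p A a
            = Real.sqrt ((|∑ x, ∑ yv, chi yv x * Jx p Y X A a x * Jy p Y X A a yv|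
                / dst p A a)^2) := (Real.sqrt_sq hL0).symm
          _ = Real.sqrt ((∑ x, ∑ yv, chi yv x * Jx p Y X A a x * Jy p Y X A a yv)^2
                / (dst p A a)^2) := by rw [div_pow, sq_abs]
          _ ≤ Real.sqrt ((2:ℝ)^n * (mX a * mY a)) := by
              refine Real.sqrt_le_sqrt ?_
              rw [div_le_iff₀ (by positivity : (0:ℝ) < (dst p A a)^2)]
              exact hsqb
          _ = Real.sqrt ((2:ℝ)^n) * (Real.sqrt (mX a) * Real.sqrt (mY a)) := by
              rw [← hRsq, Real.sqrt_sq hR0]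
      -- decomposition and triangle inequality
      have hdec : S a = (∑ x, ∑ yv, chi yv x * (Jm p Y X A a x yv
            - Jx p Y X A a x * Jy p Y X A a yv / dst p A a))
          + (∑ x, ∑ yv, chi yv x * Jx p Y X A a x * Jy p Y X A a yv) / dst p A a := by
        rw [hS]
        show (∑ x, ∑ yv, chi yv x * Jm p Y X A a x yv) = _
        have hpt : ∀ (x yv : Fin n → Bool), chi yv x * Jm p Y X A a x yv =
            chi yv x * (Jm p Y X A a x yv
              - Jx p Y X A a x * Jy p Y X A a yv / dst p A a)
            + (chi yv x * Jx p Y X A a x * Jy p Y X A a yv) / dst p A a := by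
          intro x yv
          ring
        rw [Finset.sum_congr rfl fun x _ => Finset.sum_congr rfl fun yv _ => hpt x yv]
        simp only [Finset.sum_add_distrib]
        congr 1
        simp only [← Finset.sum_div]
      have hA1 : |∑ x, ∑ yv, chi yv x * (Jm p Y X A a x yv
            - Jx p Y X A a x * Jy p Y X A a yv / dst p A a)|
          ≤ ∑ x, ∑ yv, |Jm p Y X A a x yv
            - Jx p Y X A a x * Jy p Y X A a yv / dst p A a| := by
        refine le_trans (Finset.abs_sum_le_sum_abs _ _) (Finset.sum_le_sum fun x _ =>
          le_trans (Finset.abs_sum_le_sum_abs _ _) (Finset.sum_le_sum fun yv _ => ?_))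
        rw [abs_mul, abs_chi, one_mul]
      have hA2 : |(∑ x, ∑ yv, chi yv x * Jx p Y X A a x * Jy p Y X A a yv) / dst p A a|
          = |∑ x, ∑ yv, chi yv x * Jx p Y X A a x * Jy p Y X A a yv| / dst p A a := by
        rw [abs_div, abs_of_pos hwa']
      calc |S a| ≤ |∑ x, ∑ yv, chi yv x * (Jm p Y X A a x yv
              - Jx p Y X A a x * Jy p Y X A a yv / dst p A a)|
            + |(∑ x, ∑ yv, chi yv x * Jx p Y X A a x * Jy p Y X A a yv) / dst p A a| := by
            rw [hdec]; exact abs_add_le _ _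
        _ ≤ (∑ x, ∑ yv, |Jm p Y X A a x yv
              - Jx p Y X A a x * Jy p Y X A a yv / dst p A a|)
            + |∑ x, ∑ yv, chi yv x * Jx p Y X A a x * Jy p Y X A a yv| / dst p A a := by
            rw [hA2] at *
            exact add_le_add hA1 (le_refl _)
        _ ≤ 2 * (Real.sqrt (dst p A a) * Real.sqrt (Ln a))
            + Real.sqrt ((2:ℝ)^n) * (Real.sqrt (mX a) * Real.sqrt (mY a)) :=
            add_le_add hT2 hT1
        _ = Real.sqrt ((2:ℝ)^n) * (Real.sqrt (mX a) * Real.sqrt (mY a))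
            + 2 * (Real.sqrt (dst p A a) * Real.sqrt (Ln a)) := by ring
  -- positivity of the avgMinEnt sums
  obtain ⟨a0, ha0⟩ : ∃ a0, 0 < dst p A a0 := by
    by_contra hc
    push_neg at hc
    have hz0 : ∀ a, dst p A a = 0 := fun a => le_antisymm (hc a) (hw0 a)
    rw [Finset.sum_congr rfl fun a _ => hz0 a] at hwsum
    simp at hwsum
  have hmXs : 0 < ∑ b, mX b := by
    obtain ⟨x0, hx0⟩ : ∃ x0, 0 < Jx p Y X A a0 x0 := by
      by_contra hc
      push_neg at hc
      have hall : ∀ x, Jx p Y X A a0 x = 0 := fun x => le_antisymm (hc x) (hJx0 a0 x)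
      have : dst p A a0 = 0 := by
        rw [← sum_Jx p Y X A a0, Finset.sum_congr rfl fun x _ => hall x]
        simp
      linarith
    have h1 : Jx p Y X A a0 x0 ≤ mX a0 := by
      rw [hmX]
      show _ ≤ dst p A a0 * _
      have h2 : Jx p Y X A a0 x0 / dst p A a0 ≤ Finset.univ.sup' Finset.univ_nonempty
          (fun x => pr p (fun ω => X ω = x ∧ A ω = a0) / dst p A a0) := by
        have h3 := Finset.le_sup'
          (fun x => pr p (fun ω => X ω = x ∧ A ω = a0) / dst p A a0)
          (Finset.mem_univ x0)
        rwa [hprXg a0 x0] at h3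
      calc Jx p Y X A a0 x0 = dst p A a0 * (Jx p Y X A a0 x0 / dst p A a0) := by
            field_simp
        _ ≤ _ := mul_le_mul_of_nonneg_left h2 (hw0 a0)
    calc (0:ℝ) < Jx p Y X A a0 x0 := hx0
      _ ≤ mX a0 := h1
      _ ≤ ∑ b, mX b := Finset.single_le_sum (fun b _ => hmX0 b) (Finset.mem_univ a0)
  have hmYs : 0 < ∑ b, mY b := by
    obtain ⟨y0, hy0⟩ : ∃ y0, 0 < Jy p Y X A a0 y0 := by
      by_contra hc
      push_neg at hc
      have hall : ∀ yv, Jy p Y X A a0 yv = 0 := fun yv => le_antisymm (hc yv) (hJy0 a0 yv)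
      have : dst p A a0 = 0 := by
        rw [← sum_Jy p Y X A a0, Finset.sum_congr rfl fun yv _ => hall yv]
        simp
      linarith
    have h1 : Jy p Y X A a0 y0 ≤ mY a0 := by
      rw [hmY]
      show _ ≤ dst p A a0 * _
      have h2 : Jy p Y X A a0 y0 / dst p A a0 ≤ Finset.univ.sup' Finset.univ_nonempty
          (fun yv => pr p (fun ω => Y ω = yv ∧ A ω = a0) / dst p A a0) := by
        have h3 := Finset.le_sup'
          (fun yv => pr p (fun ω => Y ω = yv ∧ A ω = a0) / dst p A a0)
          (Finset.mem_univ y0)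
        rwa [hprYg a0 y0] at h3
      calc Jy p Y X A a0 y0 = dst p A a0 * (Jy p Y X A a0 y0 / dst p A a0) := by
            field_simp
        _ ≤ _ := mul_le_mul_of_nonneg_left h2 (hw0 a0)
    calc (0:ℝ) < Jy p Y X A a0 y0 := hy0
      _ ≤ mY a0 := h1
      _ ≤ ∑ b, mY b := Finset.single_le_sum (fun b _ => hmY0 b) (Finset.mem_univ a0)
  -- first term bound
  have hterm1 : Real.sqrt ((2:ℝ)^n) * (Real.sqrt (∑ b, mX b) * Real.sqrt (∑ b, mY b))
      ≤ (2:ℝ)^(-ga) := by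
    have hprod : (∑ b, mX b) * (∑ b, mY b) ≤ (2:ℝ)^(-((n:ℝ) + 2*ga)) := by
      have h1 : Real.logb 2 ((∑ b, mX b) * (∑ b, mY b)) ≤ -((n:ℝ) + 2*ga) := by
        rw [Real.logb_mul (ne_of_gt hmXs) (ne_of_gt hmYs)]
        rw [hHY, hHX] at hmin
        linarith
      exact (Real.logb_le_iff_le_rpow one_lt_two (mul_pos hmXs hmYs)).1 h1
    have he1 : Real.sqrt ((2:ℝ)^n) * (Real.sqrt (∑ b, mX b) * Real.sqrt (∑ b, mY b))
        = Real.sqrt ((2:ℝ)^n * ((∑ b, mX b) * (∑ b, mY b))) := by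
      rw [Real.sqrt_mul (by positivity : (0:ℝ) ≤ (2:ℝ)^n),
        Real.sqrt_mul (Finset.sum_nonneg fun b _ => hmX0 b)]
    have he2 : (2:ℝ)^n * (2:ℝ)^(-((n:ℝ) + 2*ga)) = ((2:ℝ)^(-ga))^2 := by
      rw [← Real.rpow_natCast 2 n, ← Real.rpow_add (by norm_num : (0:ℝ) < 2),
        ← Real.rpow_natCast ((2:ℝ)^(-ga)) 2, ← Real.rpow_mul (by norm_num : (0:ℝ) ≤ 2)]
      congr 1
      push_cast
      ring
    rw [he1]
    calc Real.sqrt ((2:ℝ)^n * ((∑ b, mX b) * (∑ b, mY b)))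
        ≤ Real.sqrt ((2:ℝ)^n * (2:ℝ)^(-((n:ℝ) + 2*ga))) :=
          Real.sqrt_le_sqrt (mul_le_mul_of_nonneg_left hprod (by positivity))
      _ = Real.sqrt (((2:ℝ)^(-ga))^2) := by rw [he2]
      _ = (2:ℝ)^(-ga) := Real.sqrt_sq (by positivity)
  -- second term bound
  have hlog2 : (0:ℝ) < Real.log 2 := Real.log_pos one_lt_two
  have hLnsum : ∑ a, Ln a = Real.log 2 * condMI p Y X A := by
    rw [condMI_eq Y X A hp, Finset.mul_sum]
    refine Finset.sum_congr rfl fun a _ => ?_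
    simp only [hLn]
    rw [Finset.mul_sum]
    refine Finset.sum_congr rfl fun x _ => ?_
    rw [Finset.mul_sum]
    refine Finset.sum_congr rfl fun yv _ => ?_
    rw [Real.logb]
    field_simp
  have hterm2 : 2 * (Real.sqrt (∑ a, dst p A a) * Real.sqrt (∑ a, Ln a))
      ≤ 2 * (Real.sqrt (Real.log 2) * (2:ℝ)^(-ga)) := by
    rw [hwsum, Real.sqrt_one, one_mul]
    have h1 : ∑ a, Ln a ≤ Real.log 2 * (2:ℝ)^(-(2*ga)) := by
      rw [hLnsum]
      exact mul_le_mul_of_nonneg_left hI hlog2.le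
    have he : (2:ℝ)^(-(2*ga)) = ((2:ℝ)^(-ga))^2 := by
      rw [← Real.rpow_natCast ((2:ℝ)^(-ga)) 2, ← Real.rpow_mul (by norm_num : (0:ℝ) ≤ 2)]
      congr 1
      push_cast
      ring
    have h2 : Real.sqrt (Real.log 2 * (2:ℝ)^(-(2*ga)))
        = Real.sqrt (Real.log 2) * (2:ℝ)^(-ga) := by
      rw [Real.sqrt_mul hlog2.le, he, Real.sqrt_sq (by positivity)]
    have h3 := Real.sqrt_le_sqrt h1
    rw [h2] at h3
    linarith
  -- final numerics
  have h2g0 : (0:ℝ) < (2:ℝ)^(-ga) := Real.rpow_pos_of_pos (by norm_num) _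
  have hsqlog : Real.sqrt (Real.log 2) < 3/2 := by
    have h9 : Real.log 2 < (3/2)^2 := by nlinarith [Real.log_two_lt_d9]
    exact (Real.sqrt_lt' (by norm_num : (0:ℝ) < 3/2)).2 h9
  have hrhs : (2:ℝ)^(-ga+2) = 4 * (2:ℝ)^(-ga) := by
    rw [Real.rpow_add (by norm_num : (0:ℝ) < 2)]
    have h4 : (2:ℝ)^(2:ℝ) = 4 := by
      have h1 : (2:ℝ)^(2:ℝ) = (2:ℝ)^((2:ℕ):ℝ) := by norm_num
      rw [h1, Real.rpow_natCast]
      norm_num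
    rw [h4]
    ring
  calc (∑ a, dst p A a *
        |(∑ ω, if A ω = a then p ω * chi (Y ω) (X ω) * zout a else 0) / dst p A a|)
      = ∑ a, |S a| := Finset.sum_congr rfl fun a _ => hgoal_term a
    _ ≤ ∑ a, (Real.sqrt ((2:ℝ)^n) * (Real.sqrt (mX a) * Real.sqrt (mY a))
          + 2 * (Real.sqrt (dst p A a) * Real.sqrt (Ln a))) :=
        Finset.sum_le_sum fun a _ => hperA a
    _ = Real.sqrt ((2:ℝ)^n) * (∑ a, Real.sqrt (mX a) * Real.sqrt (mY a))
          + 2 * (∑ a, Real.sqrt (dst p A a) * Real.sqrt (Ln a)) := by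
        rw [Finset.sum_add_distrib, Finset.mul_sum, Finset.mul_sum]
    _ ≤ Real.sqrt ((2:ℝ)^n) * (Real.sqrt (∑ b, mX b) * Real.sqrt (∑ b, mY b))
          + 2 * (Real.sqrt (∑ a, dst p A a) * Real.sqrt (∑ a, Ln a)) :=
        add_le_add
          (mul_le_mul_of_nonneg_left (sum_sqrt_mul_sqrt _ _ hmX0 hmY0)
            (Real.sqrt_nonneg _))
          (mul_le_mul_of_nonneg_left (sum_sqrt_mul_sqrt _ _ hw0 hLn0) (by norm_num))
    _ ≤ (2:ℝ)^(-ga) + 2 * (Real.sqrt (Real.log 2) * (2:ℝ)^(-ga)) :=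
        add_le_add hterm1 hterm2
    _ < 4 * (2:ℝ)^(-ga) := by
        nlinarith [mul_pos h2g0 (sub_pos.2 hsqlog), Real.sqrt_nonneg (Real.log 2)]
    _ = (2:ℝ)^(-ga+2) := hrhs.symm
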